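/- For vectors x, y in a real normed space with x ≠ 0, the following are equivalent: (1) there exists a norm-one functional p with p(x) = ‖x‖ and p(y) = 0; (2) for every real λ, ‖x + λy‖ ≥ ‖x‖. -/

import Mathlib

theorem stmt0 {X : Type*} [NormedAddCommGroup X] [NormedSpace ℝ X]
    (x y : X) (hx : x ≠ 0) :
    (∃ p : X →L[ℝ] ℝ, ‖p‖ = 1 ∧ p x = ‖x‖ ∧ p y = 0) ↔
      ∀ l : ℝ, ‖x‖ ≤ ‖x + l • y‖ := by
  constructor
  · rintro ⟨p, hp1, hpx, hpy⟩ l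
    have : ‖x‖ = p (x + l • y) := by simp [hpx, hpy]
    rw [this]
    calc p (x + l • y) ≤ |p (x + l • y)| := le_abs_self _
    _ ≤ ‖p‖ * ‖x + l • y‖ := p.le_opNorm _
    _ = ‖x + l • y‖ := by rw [hp1, one_mul]
  · intro h
    by_cases hli : LinearIndependent ℝ ![x, y]
    · set K := Submodule.span ℝ (Set.range ![x, y]) with hK
      set b := Module.Basis.span hli with hb
      set f : K →ₗ[ℝ] ℝ := b.constr ℝ ![‖x‖, 0] with hf
      have hb0 : ((b 0 : K) : X) = x := congrArg Subtype.val (Module.Basis.span_apply hli 0)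
      have hb1 : ((b 1 : K) : X) = y := congrArg Subtype.val (Module.Basis.span_apply hli 1)
      have key : ∀ z : K, ‖f z‖ ≤ 1 * ‖z‖ := by
        intro z
        rw [one_mul]
        set c0 := b.repr z 0 with hc0
        set c1 := b.repr z 1 with hc1
        have hz : c0 • b 0 + c1 • b 1 = z := by
          have := b.sum_repr z
          rw [Fin.sum_univ_two] at this; exact this
        have hfz : f z = c0 * ‖x‖ := by
          rw [← hz]
          simp [hf, map_add, map_smul, Module.Basis.constr_basis]
        have hnz : ‖z‖ = ‖c0 • x + c1 • y‖ := by
          rw [← hz]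
          have : ((c0 • b 0 + c1 • b 1 : K) : X) = c0 • x + c1 • y := by
            push_cast [hb0, hb1]; rfl
          rw [show ‖(c0 • b 0 + c1 • b 1 : K)‖ = ‖((c0 • b 0 + c1 • b 1 : K) : X)‖ from rfl, this]
        rw [hfz, hnz]
        rcases eq_or_ne c0 0 with h0 | h0
        · simp [h0]
        · have : c0 • x + c1 • y = c0 • (x + (c1 / c0) • y) := by
            rw [smul_add, smul_smul, mul_div_cancel₀ _ h0]
          rw [this, norm_smul, Real.norm_eq_abs, abs_mul, abs_norm]
          exact mul_le_mul_of_nonneg_left (h (c1 / c0)) (abs_nonneg _)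
      set F := f.mkContinuous 1 key with hF
      obtain ⟨g, hg, hgn⟩ := exists_extension_norm_eq K F
      have hFx : F (b 0) = ‖x‖ := by
        simp [hF, hf, LinearMap.mkContinuous_apply, Module.Basis.constr_basis]
      have hgx : g x = ‖x‖ := by
        have := hg (b 0)
        rwa [hb0, hFx] at this
      have hgy : g y = 0 := by
        have := hg (b 1)
        rw [hb1] at this
        rw [this]
        simp [hF, hf, LinearMap.mkContinuous_apply, Module.Basis.constr_basis]
      refine ⟨g, ?_, hgx, hgy⟩
      have hle : ‖g‖ ≤ 1 := hgn ▸ f.mkContinuous_norm_le zero_le_one key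
      have hge : 1 ≤ ‖g‖ := by
        have hxn : (0:ℝ) < ‖x‖ := norm_pos_iff.mpr hx
        have := g.le_opNorm x
        rw [hgx] at this
        have : ‖(‖x‖ : ℝ)‖ ≤ ‖g‖ * ‖x‖ := this
        rw [Real.norm_eq_abs, abs_of_pos hxn] at this
        nlinarith
      linarith
    · rw [linearIndependent_fin2] at hli
      push_neg at hli
      simp only [Matrix.cons_val_one, Matrix.head_cons, Matrix.cons_val_zero] at hli
      by_cases hy : y = 0
      · obtain ⟨g, hg1, hgx⟩ := exists_dual_vector ℝ x (norm_ne_zero_iff.mpr hx)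
        exact ⟨g, hg1, by simpa using hgx, by simp [hy]⟩
      · obtain ⟨a, ha⟩ := hli hy
        have ha0 : a ≠ 0 := by rintro rfl; simp at ha; exact hx ha.symm
        have := h (-a)
        rw [show x + (-a) • y = x - a • y by rw [neg_smul, ← sub_eq_add_neg],
          ha, sub_self, norm_zero] at this
        exact absurd (le_antisymm this (norm_nonneg x)) (norm_ne_zero_iff.mpr hx)
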